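/- Let T be a finite group with a subgroup H of index t, let D = HgH ∪ Hg⁻¹H for some g ∈ T \ H, and suppose the coset graph X = X(T, H, D) has a Hamilton cycle. Let G = T × ⟨c⟩ where c has prime order p with gcd(t, p) = 1. Then the coset graph Y₂ = X(G, H, D ∪ HcH ∪ Hc⁻¹H) has a Hamilton cycle. -/

import Mathlib

open Pointwise

/-- The coset graph `X(G, H, D)` on the right cosets of `H` in `G`:
`Hx ∼ Hy` iff the cosets are distinct and `y * x⁻¹ ∈ D` (symmetrized). -/
def cosetGraph (G : Type*) [Group G] (H : Subgroup G) (D : Set G) :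
    SimpleGraph (Quotient (QuotientGroup.rightRel H)) where
  Adj A B := A ≠ B ∧ ∃ x y : G, Quotient.mk _ x = A ∧ Quotient.mk _ y = B ∧
      (y * x⁻¹ ∈ D ∨ x * y⁻¹ ∈ D)
  symm := by
    constructor
    rintro A B ⟨hne, x, y, hx, hy, h⟩
    exact ⟨hne.symm, y, x, hy, hx, h.symm⟩
  loopless := by constructor; rintro A ⟨hne, _⟩; exact hne rfl

/-- A graph has a Hamilton cycle. -/
def HasHamiltonCycle {V : Type*} (X : SimpleGraph V) : Prop :=
  letI := Classical.decEq V
  ∃ (v : V) (w : X.Walk v v), w.IsHamiltonianCycle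

open SimpleGraph List

namespace HamAux
variable {V : Type*} {G : SimpleGraph V}

lemma getD_getLast?_cons {α : Type*} (l : List α) (x a b : α) :
    (x::l).getLast?.getD a = (x::l).getLast?.getD b := by
  induction l generalizing x with
  | nil => rfl
  | cons y t ih => rw [List.getLast?_cons_cons]; exact ih y

/-- Build a walk from a chain of adjacencies. -/
def mkWalk (G : SimpleGraph V) : ∀ (a : V) (l : List V), List.Chain G.Adj a l → G.Walk a (l.getLastD a)
  | _, [], _ => Walk.nil
  | a, b :: l, h =>
    (Walk.cons (List.chain_cons.mp h).1 (mkWalk G b l (List.chain_cons.mp h).2)).copy rfl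
      (by cases l with
        | nil => rfl
        | cons x t => exact getD_getLast?_cons t x b a)

@[simp] lemma support_mkWalk (a : V) (l : List V) (h : List.Chain G.Adj a l) :
    (mkWalk G a l h).support = a :: l := by
  induction l generalizing a with
  | nil => rfl
  | cons b l ih => simp [mkWalk, ih]; exact ih _ _

lemma edge_start {u v : V} (w : G.Walk u v) (hu : u ∉ w.support.tail) :
    ∀ e ∈ w.edges, u ∈ e → ∃ x, w.support.tail.head? = some x ∧ e = s(u, x) := by
  cases w with
  | nil => simp
  | @cons _ b _ h w' =>
    intro e he hue
    refine ⟨b, ?_, ?_⟩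
    · simp only [Walk.support_cons, List.tail_cons]
      rw [w'.support_eq_cons]; rfl
    · simp only [Walk.edges_cons, List.mem_cons] at he
      rcases he with rfl | he
      · rfl
      · exfalso
        apply hu
        rw [Walk.support_cons, List.tail_cons]
        obtain ⟨y, rfl⟩ := Sym2.mem_iff_exists.mp hue
        exact w'.fst_mem_support_of_mem_edges he

lemma chain_append_left {α : Type*} {r : α → α → Prop} :
    ∀ {a : α} {l₁ l₂ : List α}, List.Chain r a (l₁ ++ l₂) → List.Chain r a l₁
  | _, [], _, _ => List.Chain.nil
  | a, b :: l₁, l₂, h => by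
    rw [List.cons_append] at h
    simp only [List.Chain, List.chain_cons] at h
    exact List.Chain.cons h.1 (chain_append_left h.2)

lemma chain_last {α : Type*} {r : α → α → Prop} :
    ∀ {a b : α} {l : List α}, List.Chain r a (l ++ [b]) → r (l.getLastD a) b
  | a, b, [], h => by rw [List.nil_append] at h; simp only [List.Chain, List.chain_cons] at h; exact h.1
  | a, b, x :: t, h => by
    rw [List.cons_append] at h
    simp only [List.Chain, List.chain_cons] at h
    rw [List.getLastD_cons]
    exact chain_last h.2

lemma hasHamiltonCycle_of_list (G : SimpleGraph V) (a : V) (l : List V)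
    (hchain : List.Chain G.Adj a l) (hne : l ≠ [])
    (hclose : G.Adj (l.getLastD a) a)
    (hnd : (a :: l).Nodup)
    (hcov : ∀ v, v ∈ a :: l)
    (hsecond : ∀ x ∈ l.head?, x ≠ l.getLastD a) :
    HasHamiltonCycle G := by
  classical
  have hsup : (mkWalk G a l hchain).support = a :: l := support_mkWalk a l hchain
  have hpath : (mkWalk G a l hchain).IsPath := Walk.IsPath.mk' (by rw [hsup]; exact hnd)
  have hanotl : a ∉ l := (List.nodup_cons.mp hnd).1
  have hlastmem : l.getLastD a ∈ l := by
    rw [List.getLastD_eq_getLast?, List.getLast?_eq_getLast hne]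
    exact List.getLast_mem hne
  have hnotmem : s(l.getLastD a, a) ∉ (mkWalk G a l hchain).edges := by
    intro hmem
    have hu : a ∉ (mkWalk G a l hchain).support.tail := by rw [hsup]; exact hanotl
    obtain ⟨x, hx1, hx2⟩ := edge_start _ hu _ hmem (Sym2.mem_mk_right _ _)
    rw [Sym2.eq_iff] at hx2
    rw [hsup] at hx1
    rcases hx2 with ⟨h1, h2⟩ | ⟨h1, h2⟩
    · exact hanotl (h1 ▸ hlastmem)
    · exact hsecond x hx1 h1.symm
  have hcyc : (Walk.cons hclose ↑(⟨_, hpath⟩ : G.Path a (l.getLastD a))).IsCycle :=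
    SimpleGraph.Path.cons_isCycle ⟨_, hpath⟩ hclose hnotmem
  refine ⟨l.getLastD a, Walk.cons hclose (mkWalk G a l hchain), ?_⟩
  rw [Walk.isHamiltonianCycle_iff_isCycle_and_support_count_tail_eq_one]
  refine ⟨hcyc, fun z => ?_⟩
  rw [Walk.support_cons, List.tail_cons, hsup]
  exact List.count_eq_one_of_mem hnd (hcov z)

lemma exists_list_of_ham (G : SimpleGraph V) (h : HasHamiltonCycle G) :
    ∃ (a : V) (m : List V), m ≠ [] ∧ List.Chain G.Adj a m ∧ G.Adj (m.getLastD a) a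
      ∧ (a :: m).Nodup ∧ (∀ v, v ∈ a :: m) ∧ 2 ≤ m.length := by
  classical
  obtain ⟨v, w, hw⟩ := h
  have hnn : ¬ w.Nil := hw.isCycle.not_nil
  have hlen : 3 ≤ w.length := hw.isCycle.three_le_length
  have hcount : ∀ z, w.support.tail.count z = 1 := by
    have := hw.isHamiltonian_tail
    intro z
    have h1 := this z
    rwa [Walk.support_tail_of_not_nil w hnn] at h1
  have hnd : w.support.tail.Nodup := List.nodup_iff_count_le_one.mpr (fun z => le_of_eq (hcount z))
  have hmem : ∀ z, z ∈ w.support.tail := fun z => List.count_pos_iff.mp (by rw [hcount z]; norm_num)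
  have htne : w.support.tail ≠ [] := by
    intro h0
    have := hmem v; rw [h0] at this; simp at this
  have hlast : w.support.tail.getLast htne = v := by
    rw [List.getLast_tail]
    exact w.getLast_support
  have htail : w.support.tail = w.support.tail.dropLast ++ [v] := by
    conv_lhs => rw [← List.dropLast_append_getLast htne]
    rw [hlast]
  set m := w.support.tail.dropLast with hm
  have hlen2 : 2 ≤ m.length := by
    have h1 : w.support.length = w.length + 1 := Walk.length_support w
    have h2 : w.support.tail.length = w.support.length - 1 := List.length_tail
    have h3 : m.length = w.support.tail.length - 1 := by
      rw [hm]; exact List.length_dropLast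
    omega
  have hmne : m ≠ [] := by intro h0; rw [h0] at hlen2; simp at hlen2
  have hchain : List.Chain G.Adj v (m ++ [v]) := by
    have := w.isChain_adj_support
    rw [w.support_eq_cons] at this
    rw [← htail]
    exact this
  have hvnotm : v ∉ m := by
    have := hnd
    rw [htail] at this
    have h2 := List.disjoint_of_nodup_append this
    intro hvm
    exact h2 hvm (List.mem_singleton_self v)
  refine ⟨v, m, hmne, chain_append_left hchain, chain_last hchain, ?_, ?_, hlen2⟩
  · rw [List.nodup_cons]
    refine ⟨hvnotm, ?_⟩
    rw [htail] at hnd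
    exact (List.nodup_append.mp hnd).1
  · intro z
    have := hmem z
    rw [htail] at this
    rcases List.mem_append.mp this with h1 | h1
    · exact List.mem_cons_of_mem _ h1
    · rw [List.mem_singleton.mp h1]; exact List.mem_cons_self

end HamAux

section ProdConstr
variable {V : Type*} {C : Type*} [Group C]

/-- Row `j` of the serpentine: the list `m`, reversed on odd rows. -/
def rows (m : List V) (j : ℕ) : List V := if j % 2 = 1 then m.reverse else m

/-- The serpentine part: rows `1..k`, row `j` at level `c^j`. -/
def serp (c : C) (m : List V) : ℕ → List (V × C)
  | 0 => []
  | (k+1) => serp c m k ++ (rows m (k+1)).map (fun x => (x, c^(k+1)))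

/-- The descending column at `a`: `[(a, c^k), ..., (a, c^1)]`. -/
def col (a : V) (c : C) : ℕ → List (V × C)
  | 0 => []
  | (k+1) => (a, c^(k+1)) :: col a c k

/-- The product relation realized by the coset graph. -/
def Srel (G : SimpleGraph V) (c : C) (x y : V × C) : Prop :=
  (x.2 = y.2 ∧ G.Adj x.1 y.1) ∨ (x.1 = y.1 ∧ (y.2 = c * x.2 ∨ x.2 = c * y.2))

namespace HamAux

variable {G : SimpleGraph V} {c : C} {a : V} {m : List V}

lemma rows_ne_nil (hm : m ≠ []) (j : ℕ) : rows m j ≠ [] := by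
  unfold rows; split <;> simp [hm]

lemma mem_rows {x : V} {j : ℕ} : x ∈ rows m j ↔ x ∈ m := by
  unfold rows; split <;> simp

lemma rows_nodup (hm : m.Nodup) (j : ℕ) : (rows m j).Nodup := by
  unfold rows; split <;> simp [hm]

lemma rows_chain' (hm : List.Chain' G.Adj m) (j : ℕ) : List.Chain' G.Adj (rows m j) := by
  unfold rows; split
  · simp only [List.Chain', List.isChain_reverse]
    exact hm.imp (fun x y h => h.symm)
  · exact hm

lemma rows_getLast?_eq_head?_succ (j : ℕ) :
    (rows m j).getLast? = (rows m (j+1)).head? := by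
  unfold rows
  rcases Nat.mod_two_eq_zero_or_one j with h | h
  · rw [if_neg (by omega), if_pos (by omega), List.head?_reverse]
  · rw [if_pos h, if_neg (by omega), List.getLast?_reverse]

lemma rows_getLast?_adj (hm : m ≠ []) (hwrap : G.Adj (m.getLastD a) a)
    (hhead : ∀ y ∈ m.head?, G.Adj a y) {j : ℕ} {x : V}
    (hx : (rows m j).getLast? = some x) : G.Adj x a := by
  unfold rows at hx
  split at hx
  · rw [List.getLast?_reverse] at hx
    exact (hhead x hx).symm
  · rw [List.getLast?_eq_getLast hm] at hx
    have : m.getLastD a = x := by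
      rw [List.getLastD_eq_getLast?, List.getLast?_eq_getLast hm]
      exact Option.some_injective _ hx
    exact this ▸ hwrap

lemma serp_ne_nil (hm : m ≠ []) (k : ℕ) : serp c m (k+1) ≠ [] := by
  unfold serp
  simp [rows_ne_nil hm]

lemma serp_head? (hm : m ≠ []) :
    ∀ k : ℕ, (serp c m (k+1)).head? = some (m.getLast hm, c^1)
  | 0 => by
    unfold serp serp
    rw [List.nil_append, List.head?_map]
    unfold rows
    rw [if_pos (by norm_num), List.head?_reverse, List.getLast?_eq_getLast hm]
    rfl
  | (k+1) => by
    show (serp c m (k+1) ++ _).head? = _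
    rw [List.head?_append, serp_head? hm k]
    rfl

lemma serp_getLast? (hm : m ≠ []) (k : ℕ) :
    (serp c m (k+1)).getLast? = ((rows m (k+1)).getLast?).map (fun x => (x, c^(k+1))) := by
  show (serp c m k ++ _).getLast? = _
  rw [List.getLast?_append_of_ne_nil _ (by simp [rows_ne_nil hm (k+1)]), List.getLast?_map]

lemma serp_chain' (hm : m ≠ []) (hch : List.Chain' G.Adj m) :
    ∀ k : ℕ, List.Chain' (Srel G c) (serp c m k)
  | 0 => List.isChain_nil
  | (k+1) => by
    show List.Chain' (Srel G c) (serp c m k ++ _)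
    simp only [List.Chain', List.isChain_append]
    refine ⟨serp_chain' hm hch k, ?_, ?_⟩
    · rw [List.isChain_map]
      exact (rows_chain' hch (k+1)).imp (fun x y h => Or.inl ⟨rfl, h⟩)
    · intro x hx y hy
      cases k with
      | zero => simp [serp] at hx
      | succ k' =>
        rw [serp_getLast? hm k'] at hx
        rw [List.head?_map] at hy
        rw [Option.mem_def, Option.map_eq_some_iff] at hx hy
        obtain ⟨z, hz, rfl⟩ := hx
        obtain ⟨z', hz', rfl⟩ := hy
        rw [rows_getLast?_eq_head?_succ, hz'] at hz
        right
        refine ⟨(Option.some_injective _ hz).symm ▸ rfl, Or.inl ?_⟩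
        simp [pow_succ']
  termination_by k => k

lemma mem_serp {x : V × C} : ∀ {k : ℕ}, x ∈ serp c m k → ∃ j, 1 ≤ j ∧ j ≤ k ∧ x.1 ∈ m ∧ x.2 = c^j := by
  intro k
  induction k with
  | zero => intro h; simp [serp] at h
  | succ k ih =>
    intro h
    rcases List.mem_append.mp h with h | h
    · obtain ⟨j, h1, h2, h3⟩ := ih h
      exact ⟨j, h1, by omega, h3⟩
    · obtain ⟨z, hz, rfl⟩ := List.mem_map.mp h
      exact ⟨k+1, by omega, le_refl _, mem_rows.mp hz, rfl⟩

lemma serp_mem {v : V} {j : ℕ} (hv : v ∈ m) (h1 : 1 ≤ j) :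
    ∀ {k : ℕ}, j ≤ k → (v, c^j) ∈ serp c m k := by
  intro k
  induction k with
  | zero => omega
  | succ k ih =>
    intro hjk
    rcases Nat.lt_or_ge j (k+1) with h | h
    · exact List.mem_append.mpr (Or.inl (ih (by omega)))
    · have : j = k+1 := by omega
      subst this
      exact List.mem_append.mpr (Or.inr (List.mem_map.mpr ⟨v, mem_rows.mpr hv, rfl⟩))

lemma serp_nodup (hm : m.Nodup) :
    ∀ {k : ℕ}, (∀ i j, i ≤ k → j ≤ k → c^i = c^j → i = j) → (serp c m k).Nodup := by
  intro k
  induction k with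
  | zero => intro _; exact List.nodup_nil
  | succ k ih =>
    intro hinj
    show ((serp c m k) ++ _).Nodup
    rw [List.nodup_append]
    refine ⟨ih (fun i j h1 h2 h3 => hinj i j (by omega) (by omega) h3), ?_, ?_⟩
    · exact (rows_nodup hm (k+1)).map (fun x y hxy => (Prod.mk.injEq _ _ _ _ ▸ hxy).1)
    · intro x hx _ hx' rfl
      obtain ⟨j, hj1, hj2, _, hj4⟩ := mem_serp hx
      obtain ⟨z, _, rfl⟩ := List.mem_map.mp hx'
      have : j = k+1 := hinj j (k+1) (by omega) (le_refl _) hj4.symm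
      omega

lemma col_head? : ∀ k : ℕ, (col a c (k+1)).head? = some (a, c^(k+1)) := fun _ => rfl

lemma col_ne_nil (k : ℕ) : col a c (k+1) ≠ [] := by
  unfold col; exact List.cons_ne_nil _ _

lemma col_getLast? : ∀ k : ℕ, (col a c (k+1)).getLast? = some (a, c^1)
  | 0 => rfl
  | (k+1) => by
    rw [show col a c (k+2) = [(a, c^(k+2))] ++ col a c (k+1) from rfl,
      List.getLast?_append_of_ne_nil _ (col_ne_nil k), col_getLast? k]

lemma col_chain' : ∀ k : ℕ, List.Chain' (Srel G c) (col a c k)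
  | 0 => List.isChain_nil
  | 1 => List.isChain_singleton _
  | (k+2) => by
    rw [show col a c (k+2) = (a, c^(k+2)) :: col a c (k+1) from rfl]
    simp only [List.Chain', List.isChain_cons]
    refine ⟨?_, col_chain' (k+1)⟩
    intro y hy
    rw [col_head? k] at hy
    cases hy
    right
    exact ⟨rfl, Or.inr (by simp [pow_succ'])⟩

lemma mem_col {x : V × C} : ∀ {k : ℕ}, x ∈ col a c k → ∃ j, 1 ≤ j ∧ j ≤ k ∧ x = (a, c^j) := by
  intro k
  induction k with
  | zero => intro h; simp [col] at h
  | succ k ih =>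
    intro h
    rcases List.mem_cons.mp h with h | h
    · exact ⟨k+1, by omega, le_refl _, h⟩
    · obtain ⟨j, h1, h2, h3⟩ := ih h
      exact ⟨j, h1, by omega, h3⟩

lemma col_mem {j : ℕ} (h1 : 1 ≤ j) : ∀ {k : ℕ}, j ≤ k → (a, c^j) ∈ col a c k := by
  intro k
  induction k with
  | zero => omega
  | succ k ih =>
    intro hjk
    rcases Nat.lt_or_ge j (k+1) with h | h
    · exact List.mem_cons_of_mem _ (ih (by omega))
    · have : j = k+1 := by omega
      subst this
      exact List.mem_cons_self

lemma col_nodup : ∀ {k : ℕ}, (∀ i j, i ≤ k → j ≤ k → c^i = c^j → i = j) → (col a c k).Nodup := by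
  intro k
  induction k with
  | zero => intro _; exact List.nodup_nil
  | succ k ih =>
    intro hinj
    show ((a, c^(k+1)) :: col a c k).Nodup
    rw [List.nodup_cons]
    refine ⟨?_, ih (fun i j h1 h2 h3 => hinj i j (by omega) (by omega) h3)⟩
    intro hmem
    obtain ⟨j, h1, h2, h3⟩ := mem_col hmem
    have : k+1 = j := hinj (k+1) j (le_refl _) (by omega) (congrArg Prod.snd h3)
    omega

end HamAux
end ProdConstr

namespace HamAux

lemma ham_prod {V Z : Type*} {C : Type*} [Group C] (G : SimpleGraph V) (Y : SimpleGraph Z)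
    (c : C) (p : ℕ) (hp2 : 2 ≤ p) (hord : orderOf c = p)
    (hgen : ∀ x : C, ∃ j, j < p ∧ x = c^j)
    (φ : V × C → Z) (hinjφ : Function.Injective φ) (hsurjφ : Function.Surjective φ)
    (hadjH : ∀ (A B : V) (d : C), G.Adj A B → Y.Adj (φ (A,d)) (φ (B,d)))
    (hadjV : ∀ (A : V) (d : C), Y.Adj (φ (A,d)) (φ (A, c*d)))
    (hG : HasHamiltonCycle G) : HasHamiltonCycle Y := by
  classical
  obtain ⟨a, m, hmne, hch, hwrap, hnd, hcov, hlen⟩ := exists_list_of_ham G hG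
  have hmnd : m.Nodup := (List.nodup_cons.mp hnd).2
  have hanm : a ∉ m := (List.nodup_cons.mp hnd).1
  have hc1 : c ≠ 1 := by
    intro h; rw [h, orderOf_one] at hord; omega
  have hpinj : ∀ i j, i < p → j < p → c^i = c^j → i = j := by
    intro i j hi hj h
    exact pow_injOn_Iio_orderOf (by rwa [hord, Set.mem_Iio]) (by rwa [hord, Set.mem_Iio]) h
  obtain ⟨q', hq'⟩ : ∃ q', p = q' + 2 := ⟨p - 2, by omega⟩
  set f : V → V × C := fun x => (x, (1:C)) with hf
  have hfinj : Function.Injective f := fun x y h => (Prod.mk.injEq _ _ _ _ ▸ h).1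
  set w0 : V := m.getLast hmne with hw0def
  have hw0 : m.getLast? = some w0 := List.getLast?_eq_getLast _
  have hw0D : m.getLastD a = w0 := by rw [List.getLastD_eq_getLast?, hw0]; rfl
  have hchain' : List.Chain' G.Adj (a :: m) := hch
  have hheadadj : ∀ y ∈ m.head?, G.Adj a y := by
    intro y hy
    cases m with
    | nil => exact absurd rfl hmne
    | cons x t =>
      cases hy
      exact (List.chain_cons.mp hch).1
  set bigTail : List (V × C) := m.map f ++ (serp c m (q'+1) ++ col a c (q'+1)) with hbt
  have hwhole : (a, (1:C)) :: bigTail = (a :: m).map f ++ (serp c m (q'+1) ++ col a c (q'+1)) := rfl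
  have hserpcolne : serp c m (q'+1) ++ col a c (q'+1) ≠ [] := by
    simp [serp_ne_nil hmne q']
  -- the S-chain
  have hchainS : List.Chain' (Srel G c) ((a, (1:C)) :: bigTail) := by
    rw [hwhole]
    simp only [List.Chain', List.isChain_append]
    refine ⟨?_, ?_, ?_⟩
    · rw [List.isChain_map]
      exact hchain'.imp (fun x y h => Or.inl ⟨rfl, h⟩)
    · refine ⟨serp_chain' hmne (List.isChain_cons.mp hchain').2 (q'+1),
        col_chain' (q'+1), ?_⟩
      intro x hx y hy
      rw [Option.mem_def, serp_getLast? hmne q'] at hx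
      rw [Option.mem_def, col_head? q'] at hy
      cases hy
      obtain ⟨z, hz, rfl⟩ := Option.map_eq_some_iff.mp hx
      exact Or.inl ⟨rfl, rows_getLast?_adj hmne hwrap hheadadj hz⟩
    · intro x hx y hy
      rw [Option.mem_def, List.getLast?_map,
        show (a :: m) = [a] ++ m from rfl, List.getLast?_append_of_ne_nil _ hmne, hw0] at hx
      cases hx
      rw [Option.mem_def, List.head?_append, serp_head? hmne q'] at hy
      cases hy
      exact Or.inr ⟨rfl, Or.inl (by rw [pow_one, mul_one])⟩
  -- nodup
  have hwholend : ((a, (1:C)) :: bigTail).Nodup := by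
    rw [hwhole, List.nodup_append]
    have hjne1 : ∀ j, 1 ≤ j → j ≤ q'+1 → c^j ≠ 1 := by
      intro j h1 h2 hj
      have : j = 0 := hpinj j 0 (by omega) (by omega) (by rw [hj, pow_zero])
      omega
    refine ⟨hnd.map hfinj, ?_, ?_⟩
    · rw [List.nodup_append]
      refine ⟨serp_nodup hmnd (fun i j h1 h2 h3 => hpinj i j (by omega) (by omega) h3),
        col_nodup (fun i j h1 h2 h3 => hpinj i j (by omega) (by omega) h3), ?_⟩
      intro x hx _ hx' rfl
      obtain ⟨j, _, _, hm1, _⟩ := mem_serp hx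
      obtain ⟨j', _, _, rfl⟩ := mem_col hx'
      exact hanm hm1
    · intro x hx _ hx' rfl
      obtain ⟨z, _, rfl⟩ := List.mem_map.mp hx
      rcases List.mem_append.mp hx' with h | h
      · obtain ⟨j, hj1, hj2, _, hj4⟩ := mem_serp h
        exact hjne1 j hj1 hj2 hj4.symm
      · obtain ⟨j, hj1, hj2, hj3⟩ := mem_col h
        exact hjne1 j hj1 hj2 (congrArg Prod.snd hj3).symm
  -- coverage
  have hwholecov : ∀ x : V × C, x ∈ (a, (1:C)) :: bigTail := by
    rintro ⟨v, d⟩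
    obtain ⟨j, hj, rfl⟩ := hgen d
    rw [hwhole]
    rcases Nat.eq_zero_or_pos j with rfl | hj1
    · rw [pow_zero]
      exact List.mem_append.mpr (Or.inl (List.mem_map.mpr ⟨v, hcov v, rfl⟩))
    · refine List.mem_append.mpr (Or.inr ?_)
      rcases List.mem_cons.mp (hcov v) with rfl | hvm
      · exact List.mem_append.mpr (Or.inr (col_mem hj1 (by omega)))
      · exact List.mem_append.mpr (Or.inl (serp_mem hvm hj1 (by omega)))
  -- getLast? of bigTail
  have hbtlast : bigTail.getLast? = some (a, c^1) := by
    rw [hbt, List.getLast?_append_of_ne_nil _ hserpcolne,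
      List.getLast?_append_of_ne_nil _ (col_ne_nil q'), col_getLast? q']
  have hbtne : bigTail ≠ [] := by
    intro h; rw [h] at hbtlast; simp at hbtlast
  have hbtmapne : bigTail.map φ ≠ [] := by simp [hbtne]
  have hmaplast : (bigTail.map φ).getLastD (φ (a, 1)) = φ (a, c^1) := by
    rw [List.getLastD_eq_getLast?, List.getLast?_map, hbtlast]; rfl
  -- Srel implies adjacency
  have SA : ∀ x y : V × C, Srel G c x y → Y.Adj (φ x) (φ y) := by
    rintro ⟨x1, x2⟩ ⟨y1, y2⟩ (⟨h1, h2⟩ | ⟨h1, h2 | h2⟩)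
    · dsimp at h1; subst h1
      exact hadjH x1 y1 x2 h2
    · dsimp at h1 h2; rw [h1, h2]
      exact hadjV y1 x2
    · dsimp at h1 h2; rw [h1, h2]
      exact (hadjV y1 y2).symm
  -- apply the wrapper
  apply hasHamiltonCycle_of_list Y (φ (a, 1)) (bigTail.map φ)
  · exact (List.isChain_map (l := (a, (1:C)) :: bigTail) φ).mpr (hchainS.imp SA)
  · exact hbtmapne
  · rw [hmaplast]
    have := (hadjV a 1).symm
    rwa [mul_one, ← pow_one c] at this
  · exact (List.map_cons (f := φ) (a := (a, (1:C))) (l := bigTail)) ▸ hwholend.map hinjφ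
  · intro z
    obtain ⟨x, rfl⟩ := hsurjφ z
    rw [← List.map_cons]
    exact List.mem_map.mpr ⟨x, hwholecov x, rfl⟩
  · intro x hx
    rw [hmaplast]
    rw [Option.mem_def, List.head?_map, hbt, List.head?_append, List.head?_map,
      List.head?_eq_head hmne] at hx
    cases hx
    intro hcontr
    have := hinjφ hcontr
    rw [Prod.mk.injEq] at this
    exact hc1 (by rw [← pow_one c, ← this.2])

end HamAux

theorem stmt_4 (T : Type*) [Group T] [Fintype T] (H : Subgroup T) (g : T) (hg : g ∉ H)
    (D : Set T) (hD : D = (H : Set T) * {g} * (H : Set T) ∪ (H : Set T) * {g⁻¹} * (H : Set T))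
    (hX : HasHamiltonCycle (cosetGraph T H D))
    (C : Type*) [Group C] (c : C) (hC : ∀ x : C, x ∈ Subgroup.zpowers c)
    (p : ℕ) (hp : p.Prime) (hc : orderOf c = p)
    (hcop : Nat.gcd H.index p = 1) :
    HasHamiltonCycle (cosetGraph (T × C) (H.prod ⊥)
      ((fun x => (x, (1 : C))) '' D ∪ (fun h => (h, c)) '' (H : Set T) ∪
        (fun h => (h, c⁻¹)) '' (H : Set T))) := by
  classical
  set S : Set (T × C) := (fun x => (x, (1 : C))) '' D ∪ (fun h => (h, c)) '' (H : Set T) ∪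
        (fun h => (h, c⁻¹)) '' (H : Set T) with hS
  set Y := cosetGraph (T × C) (H.prod ⊥) S with hY
  set X := cosetGraph T H D with hXdef
  -- the identification map
  have hwd : ∀ (d : C) (x y : T), (QuotientGroup.rightRel H) x y →
      (Quotient.mk (QuotientGroup.rightRel (H.prod (⊥ : Subgroup C))) (x, d)) =
      (Quotient.mk _ (y, d)) := by
    intro d x y hxy
    have h1 : y * x⁻¹ ∈ H := QuotientGroup.rightRel_apply.mp hxy
    apply Quotient.sound
    apply QuotientGroup.rightRel_apply.mpr
    rw [Subgroup.mem_prod]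
    exact ⟨by simpa using h1, by simp⟩
  set φ : Quotient (QuotientGroup.rightRel H) × C →
      Quotient (QuotientGroup.rightRel (H.prod (⊥ : Subgroup C))) :=
    fun Ad => Quotient.liftOn Ad.1 (fun x => Quotient.mk _ (x, Ad.2)) (hwd Ad.2) with hφ
  have hφmk : ∀ (x : T) (d : C), φ (Quotient.mk _ x, d) = Quotient.mk _ (x, d) := fun _ _ => rfl
  have hc1 : c ≠ 1 := by
    intro h
    rw [h, orderOf_one] at hc
    exact hp.one_lt.ne' hc.symm
  have hinjφ : Function.Injective φ := by
    rintro ⟨A, d⟩ ⟨B, e⟩ h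
    obtain ⟨x, rfl⟩ := Quotient.exists_rep A
    obtain ⟨y, rfl⟩ := Quotient.exists_rep B
    rw [hφmk, hφmk] at h
    have h2 := Quotient.exact h
    obtain ⟨h3, h4⟩ := Subgroup.mem_prod.mp (QuotientGroup.rightRel_apply.mp h2)
    simp only [Prod.fst_mul, Prod.fst_inv, Prod.snd_mul, Prod.snd_inv] at h3 h4
    rw [Subgroup.mem_bot, mul_inv_eq_one] at h4
    refine Prod.ext ?_ h4.symm
    exact Quotient.sound (QuotientGroup.rightRel_apply.mpr h3)
  have hsurjφ : Function.Surjective φ := by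
    intro z
    obtain ⟨⟨x, d⟩, rfl⟩ := Quotient.exists_rep z
    exact ⟨(Quotient.mk _ x, d), rfl⟩
  -- horizontal adjacency
  have hadjH : ∀ (A B : Quotient (QuotientGroup.rightRel H)) (d : C),
      X.Adj A B → Y.Adj (φ (A, d)) (φ (B, d)) := by
    rintro A B d ⟨hne, x, y, hx, hy, hmem⟩
    refine ⟨fun h => hne (congrArg Prod.fst (hinjφ h)), (x, d), (y, d), ?_, ?_, ?_⟩
    · rw [← hx]; rfl
    · rw [← hy]; rfl
    · have hprod : ∀ u v : T, (u, d) * (v, d)⁻¹ = (u * v⁻¹, 1) := by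
        intro u v
        rw [Prod.inv_mk, Prod.mk_mul_mk, mul_inv_cancel]
      rcases hmem with h | h
      · exact Or.inl (by rw [hprod]; exact Or.inl (Or.inl ⟨_, h, rfl⟩))
      · exact Or.inr (by rw [hprod]; exact Or.inl (Or.inl ⟨_, h, rfl⟩))
  -- vertical adjacency
  have hadjV : ∀ (A : Quotient (QuotientGroup.rightRel H)) (d : C),
      Y.Adj (φ (A, d)) (φ (A, c * d)) := by
    intro A d
    obtain ⟨x, rfl⟩ := Quotient.exists_rep A
    refine ⟨?_, (x, d), (x, c * d), rfl, rfl, ?_⟩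
    · intro h
      have := congrArg Prod.snd (hinjφ h)
      dsimp at this
      exact hc1 (by rw [← mul_eq_right (a := c) (b := d)]; exact this.symm)
    · refine Or.inl ?_
      have : (x, c * d) * (x, d)⁻¹ = ((1 : T), c) := by
        rw [Prod.inv_mk, Prod.mk_mul_mk, mul_inv_cancel, mul_inv_cancel_right]
      rw [this]
      exact Or.inl (Or.inr ⟨1, H.one_mem, rfl⟩)
  -- generation
  have hgen : ∀ x : C, ∃ j, j < p ∧ x = c^j := by
    intro x
    obtain ⟨k, hk⟩ := Subgroup.mem_zpowers_iff.mp (hC x)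
    have hppos : (0:ℤ) < (p:ℤ) := by exact_mod_cast hp.pos
    refine ⟨(k % (p:ℤ)).toNat, ?_, ?_⟩
    · have h1 : k % (p:ℤ) < p := Int.emod_lt_of_pos k hppos
      omega
    · have h0 : (0:ℤ) ≤ k % (p:ℤ) := Int.emod_nonneg k (by omega)
      have : c ^ ((k % (p:ℤ)).toNat : ℤ) = c ^ k := by
        rw [Int.toNat_of_nonneg h0, ← hc, zpow_mod_orderOf]
      rw [← hk, ← this, zpow_natCast]
  exact HamAux.ham_prod X Y c p hp.two_le hc hgen φ hinjφ hsurjφ hadjH hadjV hX
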